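/- (Majorant bound gives convergence.) Let b ∈ ℂ[X] of degree r with b(k) ≠ 0 for all k ≥ 1, and suppose there exist ε > 0 with |b(k)| ≥ ε k^r for all k ≥ 1, and constants C, K > 0 with |c_{k,j}| ≤ C K^{k−j} k^r for all 1 ≤ j < k. Then the unique solution (u_k) of b(k)u_k + Σ_{j<k} c_{k,j}u_j = 0 with given u₀ satisfies |u_k| ≤ |u₀| M^k for some M > 0 depending only on ε, C, K, r; in particular Σ u_k t^k has positive radius of convergence. -/

import Mathlib

/- Majorant bound gives convergence: with `|b(k)| ≥ ε k^r` for `k ≥ 1` and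
   `|c_{k,j}| ≤ C K^{k−j} k^r` for `j < k`, there is `M > 0`, depending only on
   `ε, C, K, r`, such that the unique solution of the recursion
   `b(k)u_k + Σ_{j<k}c_{k,j}u_j = 0` satisfies `|u_k| ≤ |u₀| M^k`
   (so `Σ u_k t^k` has positive radius of convergence). -/
theorem stmt_14 (r : ℕ) (ε C K : ℝ) (hε : 0 < ε) (hC : 0 < C) (hK : 0 < K) :
    ∃ M : ℝ, 0 < M ∧
      ∀ (b : Polynomial ℂ) (c : ℕ → ℕ → ℂ) (u : ℕ → ℂ),
        b.natDegree = r →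
        (∀ k : ℕ, 1 ≤ k → ε * (k : ℝ) ^ r ≤ ‖b.eval (k : ℂ)‖) →
        (∀ k j : ℕ, j < k → ‖c k j‖ ≤ C * K ^ (k - j) * (k : ℝ) ^ r) →
        (∀ k : ℕ, 1 ≤ k →
          b.eval (k : ℂ) * u k + ∑ j ∈ Finset.range k, c k j * u j = 0) →
        ∀ k : ℕ, ‖u k‖ ≤ ‖u 0‖ * M ^ k := by
  set q : ℝ := 1 + C / ε with hqdef
  have hq1 : 1 < q := by
    have : 0 < C / ε := div_pos hC hε
    rw [hqdef]; linarith
  have hq0 : 0 < q := by linarith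
  refine ⟨K * q, by positivity, ?_⟩
  intro b c u hdeg hb hc hrec k
  induction k using Nat.strong_induction_on with
  | _ k ih =>
    rcases Nat.eq_zero_or_pos k with rfl | hk
    · simp
    · set A := ‖u 0‖ with hA
      have hA0 : 0 ≤ A := norm_nonneg _
      have hkr : (0:ℝ) < (k:ℝ) ^ r := by positivity
      -- geometric sum bound
      have hS : ∑ j ∈ Finset.range k, K ^ (k - j) * (K * q) ^ j
          ≤ ε / C * (K * q) ^ k := by
        have hcongr : ∀ j ∈ Finset.range k,
            K ^ (k - j) * (K * q) ^ j = K ^ k * q ^ j := by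
          intro j hj
          rw [Finset.mem_range] at hj
          rw [mul_pow, ← mul_assoc, ← pow_add]
          congr 2
          omega
        rw [Finset.sum_congr rfl hcongr, ← Finset.mul_sum,
          geom_sum_eq (ne_of_gt hq1) k]
        have hq1' : (0:ℝ) < q - 1 := by linarith
        have h1 : (q ^ k - 1) / (q - 1) ≤ q ^ k / (q - 1) := by
          gcongr
          linarith
        have h2 : K ^ k * ((q ^ k - 1) / (q - 1)) ≤ K ^ k * (q ^ k / (q - 1)) := by
          gcongr
        refine h2.trans (le_of_eq ?_)
        have hq1'' : q - 1 = C / ε := by rw [hqdef]; ring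
        rw [hq1'', mul_pow]
        field_simp
      -- recursion gives the key inequality
      have heq : b.eval (k : ℂ) * u k = -∑ j ∈ Finset.range k, c k j * u j := by
        have := hrec k hk
        linear_combination this
      have habs : ‖b.eval (k : ℂ)‖ * ‖u k‖
          ≤ ∑ j ∈ Finset.range k, ‖c k j‖ * ‖u j‖ := by
        rw [← norm_mul, heq, norm_neg]
        calc ‖∑ j ∈ Finset.range k, c k j * u j‖
            ≤ ∑ j ∈ Finset.range k, ‖c k j * u j‖ :=
              norm_sum_le _ _
          _ = ∑ j ∈ Finset.range k, ‖c k j‖ * ‖u j‖ := by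
              simp [map_mul]
      have hterm : ∑ j ∈ Finset.range k, ‖c k j‖ * ‖u j‖
          ≤ ∑ j ∈ Finset.range k,
              (C * K ^ (k - j) * (k:ℝ) ^ r) * (A * (K * q) ^ j) := by
        apply Finset.sum_le_sum
        intro j hj
        rw [Finset.mem_range] at hj
        apply mul_le_mul (hc k j hj) (ih j hj) (norm_nonneg _)
        positivity
      have hsum2 : ∑ j ∈ Finset.range k,
              (C * K ^ (k - j) * (k:ℝ) ^ r) * (A * (K * q) ^ j)
          = C * (k:ℝ) ^ r * A * ∑ j ∈ Finset.range k, K ^ (k - j) * (K * q) ^ j := by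
        rw [Finset.mul_sum]
        apply Finset.sum_congr rfl
        intro j _
        ring
      have hchain : ε * (k:ℝ) ^ r * ‖u k‖
          ≤ ε * (k:ℝ) ^ r * (A * (K * q) ^ k) := by
        calc ε * (k:ℝ) ^ r * ‖u k‖
            ≤ ‖b.eval (k : ℂ)‖ * ‖u k‖ := by
              apply mul_le_mul_of_nonneg_right (hb k hk) (norm_nonneg _)
          _ ≤ ∑ j ∈ Finset.range k, ‖c k j‖ * ‖u j‖ := habs
          _ ≤ C * (k:ℝ) ^ r * A * ∑ j ∈ Finset.range k, K ^ (k - j) * (K * q) ^ j := by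
              rw [← hsum2]; exact hterm
          _ ≤ C * (k:ℝ) ^ r * A * (ε / C * (K * q) ^ k) := by
              apply mul_le_mul_of_nonneg_left hS
              positivity
          _ = ε * (k:ℝ) ^ r * (A * (K * q) ^ k) := by
              field_simp
      have hpos : (0:ℝ) < ε * (k:ℝ) ^ r := by positivity
      exact le_of_mul_le_mul_left hchain hpos
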